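/- Let E be a Banach space, T(t) a uniformly bounded family of operators with T(t)P^c = P^c for a bounded projection P^c, P^s = I − P^c, and suppose y : [0,∞) → E is continuous, exponentially decaying, and satisfies the Lyapunov–Perron fixed-point equation y(t) = T(t)P^s y(0) + ∫₀ᵗ T(t−τ)P^s F(y(τ)) dτ − ∫_t^∞ P^c F(y(τ)) dτ for all t ≥ 0, where F(y(·)) is integrable on [0,∞). Then y satisfies the mild-solution (Duhamel) equation y(t) = T(t) y(0) + ∫₀ᵗ T(t−τ) F(y(τ)) dτ for all t ≥ 0, and P^c y(0) = −∫₀^∞ P^c F(y(τ)) dτ. -/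

import Mathlib

open MeasureTheory

theorem stmt_17 {E : Type*} [NormedAddCommGroup E] [NormedSpace ℝ E] [CompleteSpace E]
    (T : ℝ → E →L[ℝ] E) (Pc : E →L[ℝ] E) (Ps : E →L[ℝ] E) (F : E → E) (y : ℝ → E)
    (hPs : Ps = ContinuousLinearMap.id ℝ E - Pc)
    (hproj : Pc.comp Pc = Pc)
    (hfix : ∀ t : ℝ, 0 ≤ t → ∀ x : E, T t (Pc x) = Pc x)
    (hcomm : ∀ t : ℝ, 0 ≤ t → ∀ x : E, T t (Pc x) = Pc (T t x))
    (hbdd : ∃ M : ℝ, ∀ t : ℝ, 0 ≤ t → ‖T t‖ ≤ M)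
    (hycont : Continuous y)
    (hydecay : ∃ K ω : ℝ, 0 < ω ∧ ∀ t : ℝ, 0 ≤ t → ‖y t‖ ≤ K * Real.exp (-ω * t))
    (hFyint : IntegrableOn (fun τ => F (y τ)) (Set.Ici 0))
    (hTFint : ∀ t : ℝ, 0 ≤ t →
      IntervalIntegrable (fun τ => T (t - τ) (F (y τ))) volume 0 t)
    (hLP : ∀ t : ℝ, 0 ≤ t →
      y t = T t (Ps (y 0)) + (∫ τ in (0:ℝ)..t, T (t - τ) (Ps (F (y τ))))
              - ∫ τ in Set.Ici t, Pc (F (y τ))) :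
    (∀ t : ℝ, 0 ≤ t → y t = T t (y 0) + ∫ τ in (0:ℝ)..t, T (t - τ) (F (y τ))) ∧
    Pc (y 0) = -∫ τ in Set.Ici (0:ℝ), Pc (F (y τ)) := by
  have hPcPc : ∀ x : E, Pc (Pc x) = Pc x := fun x =>
    DFunLike.congr_fun hproj x
  set g : ℝ → E := fun τ => Pc (F (y τ)) with hg
  have hgIci : IntegrableOn g (Set.Ici (0:ℝ)) := Pc.integrable_comp hFyint
  -- second part
  have h0 := hLP 0 le_rfl
  rw [intervalIntegral.integral_same] at h0
  have hPcPs : Pc (Ps (y 0)) = 0 := by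
    rw [hPs]; simp [hPcPc]
  have hpart2 : Pc (y 0) = -∫ τ in Set.Ici (0:ℝ), g τ := by
    have := congrArg Pc h0
    rw [map_sub, map_add, map_zero, add_zero] at this
    rw [← hcomm 0 le_rfl, hPcPs, map_zero, zero_sub] at this
    rw [this, ← Pc.integral_comp_comm hgIci]
    congr 1
    exact setIntegral_congr_fun measurableSet_Ici (fun τ _ => hPcPc _)
  refine ⟨fun t ht => ?_, hpart2⟩
  -- splitting of the integral
  have hdisj : Disjoint (Set.Ico (0:ℝ) t) (Set.Ici t) := by
    rw [Set.disjoint_left]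
    intro x hx hx'
    exact absurd hx' (not_le.mpr hx.2)
  have hgIco : IntegrableOn g (Set.Ico 0 t) := hgIci.mono_set Set.Ico_subset_Ici_self
  have hgIcit : IntegrableOn g (Set.Ici t) := hgIci.mono_set (Set.Ici_subset_Ici.mpr ht)
  have hkey : (∫ τ in Set.Ici (0:ℝ), g τ)
      = (∫ τ in (0:ℝ)..t, g τ) + ∫ τ in Set.Ici t, g τ := by
    rw [← Set.Ico_union_Ici_eq_Ici ht,
      setIntegral_union hdisj measurableSet_Ici hgIco hgIcit,
      intervalIntegral.integral_of_le ht, Measure.restrict_congr_set Ico_ae_eq_Ioc]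
  have hgInt : IntervalIntegrable g volume 0 t := by
    rw [intervalIntegrable_iff, Set.uIoc_of_le ht]
    exact hgIci.mono_set (Set.Ioc_subset_Icc_self.trans (Set.Icc_subset_Ici_self))
  -- rewrite the inner integrand
  have hcongr : (∫ τ in (0:ℝ)..t, T (t - τ) (Ps (F (y τ))))
      = (∫ τ in (0:ℝ)..t, T (t - τ) (F (y τ))) - ∫ τ in (0:ℝ)..t, g τ := by
    rw [← intervalIntegral.integral_sub (hTFint t ht) hgInt]
    apply intervalIntegral.integral_congr
    intro τ hτ
    rw [Set.uIcc_of_le ht] at hτ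
    have h1 : (0:ℝ) ≤ t - τ := by linarith [hτ.2]
    rw [hPs]
    simp only [ContinuousLinearMap.sub_apply, ContinuousLinearMap.id_apply, map_sub,
      hfix _ h1]
    rfl
  have hTs : T t (Ps (y 0)) = T t (y 0) - Pc (y 0) := by
    rw [hPs]
    simp only [ContinuousLinearMap.sub_apply, ContinuousLinearMap.id_apply, map_sub,
      hfix t ht]
  have := hLP t ht
  rw [hTs, hcongr, hpart2, hkey] at this
  rw [this]
  abel
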